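/- Let F be a quasihomogeneous WDVV solution with charges (q,d) on U ⊆ ℝ^N, with Euler field E = Σ_α(1−q_α)t^α∂_α, and let g^{αβ}(t) be its intersection form. On the open subset of U where (g^{αβ}(t)) is invertible, the Levi-Civita covariant derivative of E with respect to the metric g satisfies ∂_α E^β + Γ^β_{αγ} E^γ = ((1−d)/2) δ^β_α for all α, β, where E^β = (1−q_β)t^β and Γ^ε_{αβ} are the Christoffel symbols of g in the coordinates t. In particular, if d = 1 the Euler vector field is covariantly constant with respect to the Levi-Civita connection of the intersection form. -/

import Mathlib

open scoped BigOperators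

/-- Partial derivative of `f` in the `α`-th coordinate direction. -/
noncomputable def pd {N : ℕ} (α : Fin N) (f : (Fin N → ℝ) → ℝ) : (Fin N → ℝ) → ℝ :=
  fun t => fderiv ℝ f t (Pi.single α 1)

/-- Third partial derivatives `c_{αβγ} = ∂³F/∂t^α∂t^β∂t^γ`. -/
noncomputable def c3 {N : ℕ} (F : (Fin N → ℝ) → ℝ) (α β γ : Fin N) : (Fin N → ℝ) → ℝ :=
  pd α (pd β (pd γ F))

/-- `η_{αβ} = δ_{α+β,N+1}` (in 1-based index notation); in 0-based indexing this is
`β = Fin.rev α`.  It coincides with its own inverse `η^{αβ}`. -/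
def eta {N : ℕ} (α β : Fin N) : ℝ := if β = α.rev then 1 else 0

/-- The index of the coordinate `t^N` (0-based: `N-1`). -/
def lastIdx (N : ℕ) [NeZero N] : Fin N := (0 : Fin N).rev

/-- `F` is a WDVV solution on `U`: smoothness, normalization `c_{1αβ} = η_{αβ}`, and the
associativity equations. -/
def IsWDVV {N : ℕ} [NeZero N] (F : (Fin N → ℝ) → ℝ) (U : Set (Fin N → ℝ)) : Prop :=
  (∀ t ∈ U, ContDiffAt ℝ (⊤ : ℕ∞) F t) ∧
  (∀ t ∈ U, ∀ α β : Fin N, c3 F 0 α β t = eta α β) ∧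
  (∀ t ∈ U, ∀ α β γ δ : Fin N,
    ∑ lam, ∑ mu, c3 F α β lam t * eta lam mu * c3 F mu δ γ t =
    ∑ lam, ∑ mu, c3 F δ β lam t * eta lam mu * c3 F mu α γ t)

/-- `F` is quasihomogeneous on `U` with charges `q` and weight `d`:
`q_1 = 0`, `q_N = d`, `q_α + q_{N+1-α} = d`, and `E(F) = (3-d) F` modulo a polynomial of
degree at most `2`, where `E = Σ_α (1-q_α) t^α ∂_α`. -/
def IsQH {N : ℕ} [NeZero N] (F : (Fin N → ℝ) → ℝ) (U : Set (Fin N → ℝ))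
    (q : Fin N → ℝ) (d : ℝ) : Prop :=
  q 0 = 0 ∧ q (lastIdx N) = d ∧ (∀ α : Fin N, q α + q α.rev = d) ∧
  ∃ Q : MvPolynomial (Fin N) ℝ, Q.totalDegree ≤ 2 ∧
    ∀ t ∈ U, (∑ α, (1 - q α) * t α * pd α F t) = (3 - d) * F t + MvPolynomial.eval t Q

/-- The inversion map `t ↦ t̂`:
`t̂^1 = (1/2) t_σ t^σ / t^N`, `t̂^α = t^α/t^N` (`1<α<N`), `t̂^N = -1/t^N`,
with `t_σ t^σ = Σ_σ t^σ t^{N+1-σ}`. -/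
noncomputable def invMap {N : ℕ} [NeZero N] (t : Fin N → ℝ) : Fin N → ℝ := fun α =>
  if α = 0 then (∑ σ, t σ * t σ.rev) / (2 * t (lastIdx N))
  else if α = lastIdx N then -1 / t (lastIdx N)
  else t α / t (lastIdx N)

/-- The inverse of the inversion map, `t̂ ↦ t`:
`t^1 = (1/2) t̂_σ t̂^σ / t̂^N`, `t^α = -t̂^α/t̂^N` (`1<α<N`), `t^N = -1/t̂^N`. -/
noncomputable def invMapInv {N : ℕ} [NeZero N] (s : Fin N → ℝ) : Fin N → ℝ := fun α =>
  if α = 0 then (∑ σ, s σ * s σ.rev) / (2 * s (lastIdx N))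
  else if α = lastIdx N then -1 / s (lastIdx N)
  else -(s α) / s (lastIdx N)

/-- The inverted prepotential `F̂(t̂) = (t̂^N)² F(t(t̂)) + (1/2) t̂^1 t̂_σ t̂^σ`. -/
noncomputable def invF {N : ℕ} [NeZero N] (F : (Fin N → ℝ) → ℝ) : (Fin N → ℝ) → ℝ :=
  fun s => (s (lastIdx N))^2 * F (invMapInv s) + (1/2) * s 0 * (∑ σ, s σ * s σ.rev)

/-- The intersection form `g^{αβ}(t) = Σ_ε (1-q_ε) t^ε η^{αλ} η^{βμ} c_{λμε}(t)`. -/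
noncomputable def iform {N : ℕ} (F : (Fin N → ℝ) → ℝ) (q : Fin N → ℝ)
    (t : Fin N → ℝ) : Matrix (Fin N) (Fin N) ℝ :=
  Matrix.of fun α β =>
    ∑ ε, (1 - q ε) * t ε * ∑ lam, ∑ mu, eta α lam * eta β mu * c3 F lam mu ε t

/-- The Christoffel symbols (with one upper index) of the Levi-Civita connection of the
metric `g_{αβ}` (the matrix inverse of the intersection form), in the coordinates `t`:
`Γ^ε_{αβ} = (1/2) g^{εσ} (∂_α g_{σβ} + ∂_β g_{σα} - ∂_σ g_{αβ})`. -/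
noncomputable def christoffel {N : ℕ} (F : (Fin N → ℝ) → ℝ) (q : Fin N → ℝ)
    (t : Fin N → ℝ) (ε α β : Fin N) : ℝ :=
  (1/2) * ∑ σ, iform F q t ε σ *
    (pd α (fun x => (iform F q x)⁻¹ σ β) t + pd β (fun x => (iform F q x)⁻¹ σ α) t
      - pd σ (fun x => (iform F q x)⁻¹ α β) t)

open scoped BigOperators



section pdAPI
variable {N : ℕ}

lemma pd_congr {f g : (Fin N → ℝ) → ℝ} {t : Fin N → ℝ} (h : f =ᶠ[nhds t] g) (α : Fin N) :
    pd α f t = pd α g t := by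
  simp only [pd, h.fderiv_eq]

lemma pd_congr_on {f g : (Fin N → ℝ) → ℝ} {U : Set (Fin N → ℝ)} (hU : IsOpen U)
    (h : ∀ x ∈ U, f x = g x) {t : Fin N → ℝ} (ht : t ∈ U) (α : Fin N) :
    pd α f t = pd α g t :=
  pd_congr (Filter.eventuallyEq_of_mem (hU.mem_nhds ht) h) α

lemma pd_const (c : ℝ) (α : Fin N) (t : Fin N → ℝ) : pd α (fun _ => c) t = 0 := by
  simp [pd]

lemma pd_add {f g : (Fin N → ℝ) → ℝ} {t : Fin N → ℝ} (hf : DifferentiableAt ℝ f t)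
    (hg : DifferentiableAt ℝ g t) (α : Fin N) :
    pd α (fun x => f x + g x) t = pd α f t + pd α g t := by
  simp [pd, fderiv_fun_add hf hg]

lemma pd_mul {f g : (Fin N → ℝ) → ℝ} {t : Fin N → ℝ} (hf : DifferentiableAt ℝ f t)
    (hg : DifferentiableAt ℝ g t) (α : Fin N) :
    pd α (fun x => f x * g x) t = f t * pd α g t + g t * pd α f t := by
  simp [pd, fderiv_fun_mul hf hg]

lemma pd_sum {ι : Type*} {s : Finset ι} {f : ι → (Fin N → ℝ) → ℝ} {t : Fin N → ℝ}
    (hf : ∀ i ∈ s, DifferentiableAt ℝ (f i) t) (α : Fin N) :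
    pd α (fun x => ∑ i ∈ s, f i x) t = ∑ i ∈ s, pd α (f i) t := by
  simp [pd, fderiv_fun_sum hf]

lemma diffAt_coord (ε : Fin N) (t : Fin N → ℝ) :
    DifferentiableAt ℝ (fun x : Fin N → ℝ => x ε) t :=
  (ContinuousLinearMap.proj ε : (Fin N → ℝ) →L[ℝ] ℝ).differentiableAt

lemma pd_coord (α ε : Fin N) (t : Fin N → ℝ) :
    pd α (fun x => x ε) t = if ε = α then 1 else 0 := by
  have h0 : (fun x : Fin N → ℝ => x ε) = ⇑(ContinuousLinearMap.proj ε : (Fin N → ℝ) →L[ℝ] ℝ) := rfl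
  simp only [pd, h0, ContinuousLinearMap.fderiv]
  simp [Pi.single_apply]

lemma pd_const_mul {f : (Fin N → ℝ) → ℝ} {t : Fin N → ℝ} (hf : DifferentiableAt ℝ f t)
    (c : ℝ) (α : Fin N) : pd α (fun x => c * f x) t = c * pd α f t := by
  rw [pd_mul (differentiableAt_const c) hf]
  simp [pd_const]

lemma pd_coordmul (c : ℝ) (ε α : Fin N) (t : Fin N → ℝ) :
    pd α (fun x => c * x ε) t = c * (if ε = α then 1 else 0) := by
  rw [pd_const_mul (diffAt_coord ε t), pd_coord]

/-- smoothness of `pd` -/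
lemma contDiffAt_pd {f : (Fin N → ℝ) → ℝ} {t : Fin N → ℝ}
    (hf : ContDiffAt ℝ (⊤ : ℕ∞) f t) (α : Fin N) :
    ContDiffAt ℝ (⊤ : ℕ∞) (pd α f) t := by
  have h1 : ContDiffAt ℝ (⊤ : ℕ∞) (fderiv ℝ f) t := by
    apply hf.fderiv_right
    exact_mod_cast le_refl _
  exact h1.clm_apply contDiffAt_const

lemma diffAt_of_contDiffAt {f : (Fin N → ℝ) → ℝ} {t : Fin N → ℝ}
    (hf : ContDiffAt ℝ (⊤ : ℕ∞) f t) : DifferentiableAt ℝ f t := by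
  apply hf.differentiableAt
  simp

lemma pd_comm {f : (Fin N → ℝ) → ℝ} {t : Fin N → ℝ}
    (hf : ContDiffAt ℝ (⊤ : ℕ∞) f t) (α β : Fin N) :
    pd α (pd β f) t = pd β (pd α f) t := by
  have hsymm : IsSymmSndFDerivAt ℝ f t := by
    apply hf.isSymmSndFDerivAt
    simp only [minSmoothness_of_isRCLikeNormedField]; exact WithTop.coe_le_coe.mpr le_top
  have hd : DifferentiableAt ℝ (fderiv ℝ f) t := by
    refine (hf.fderiv_right (m := ((⊤:ℕ∞) : WithTop ℕ∞)) ?_).differentiableAt (n := ((⊤:ℕ∞) : WithTop ℕ∞)) ?_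
    · exact_mod_cast le_refl _
    · simp
  have key : ∀ v : Fin N → ℝ, ∀ w,
      fderiv ℝ (fun x => fderiv ℝ f x v) t w = fderiv ℝ (fderiv ℝ f) t w v := by
    intro v w
    have h2 : HasFDerivAt (fun x => fderiv ℝ f x v)
        (((ContinuousLinearMap.apply ℝ ℝ v).comp (fderiv ℝ (fderiv ℝ f) t))) t :=
      (ContinuousLinearMap.apply ℝ ℝ v).hasFDerivAt.comp t hd.hasFDerivAt
    rw [h2.fderiv]
    rfl
  unfold pd
  rw [key, key]
  exact hsymm _ _

end pdAPI

open MvPolynomial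

section poly
variable {N : ℕ}

lemma contDiff_eval (Q : MvPolynomial (Fin N) ℝ) :
    ContDiff ℝ (⊤ : ℕ∞) (fun x : Fin N → ℝ => MvPolynomial.eval x Q) := by
  induction Q using MvPolynomial.induction_on with
  | C a => simpa using contDiff_const (c := a)
  | add p q hp hq => simpa using hp.add hq
  | mul_X p i hp =>
    simp only [map_mul, MvPolynomial.eval_X]
    exact hp.mul ((ContinuousLinearMap.proj i : (Fin N → ℝ) →L[ℝ] ℝ).contDiff)

lemma diffAt_eval (Q : MvPolynomial (Fin N) ℝ) (t : Fin N → ℝ) :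
    DifferentiableAt ℝ (fun x : Fin N → ℝ => MvPolynomial.eval x Q) t := by
  apply (contDiff_eval Q).contDiffAt.differentiableAt
  simp

lemma pd_eval (Q : MvPolynomial (Fin N) ℝ) (i : Fin N) (t : Fin N → ℝ) :
    pd i (fun x => MvPolynomial.eval x Q) t = MvPolynomial.eval t (MvPolynomial.pderiv i Q) := by
  induction Q using MvPolynomial.induction_on generalizing t with
  | C a =>
    simp only [MvPolynomial.eval_C, MvPolynomial.pderiv_C, map_zero]
    exact pd_const a i t
  | add p q hp hq =>
    simp only [map_add]
    rw [pd_add (diffAt_eval p t) (diffAt_eval q t), hp, hq]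
  | mul_X p j hp =>
    simp only [map_mul, MvPolynomial.eval_X, MvPolynomial.pderiv_mul, map_add, map_mul,
      MvPolynomial.pderiv_X]
    rw [pd_mul (diffAt_eval p t) (diffAt_coord j t), hp, pd_coord]
    rcases eq_or_ne j i with h | h
    · subst h
      simp [Pi.single_apply]
      try ring
    · simp [h, Pi.single_apply, Ne.symm h]
      try ring

lemma totalDegree_pderiv_le (Q : MvPolynomial (Fin N) ℝ) (i : Fin N) {n : ℕ}
    (h : Q.totalDegree ≤ n + 1) : (MvPolynomial.pderiv i Q).totalDegree ≤ n := by
  classical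
  conv_lhs => rw [Q.as_sum]
  rw [map_sum]
  apply (MvPolynomial.totalDegree_finset_sum _ _).trans
  apply Finset.sup_le
  intro v hv
  rw [MvPolynomial.pderiv_monomial]
  rcases eq_or_ne (v i) 0 with hvi | hvi
  · simp [hvi]
  · apply (MvPolynomial.totalDegree_monomial_le _ _).trans
    have hle : Finsupp.single i 1 ≤ v := by
      rw [Finsupp.single_le_iff]
      omega
    have h2 : (v - Finsupp.single i 1) + Finsupp.single i 1 = v := tsub_add_cancel_of_le hle
    have h3 : ((v - Finsupp.single i 1) + Finsupp.single i 1).sum (fun _ e => e)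
        = v.sum fun _ e => e := by rw [h2]
    rw [Finsupp.sum_add_index' (fun _ => rfl) (fun _ _ _ => rfl),
      Finsupp.sum_single_index rfl] at h3
    have hv' : (v.sum fun _ e => e) ≤ n + 1 := le_trans (MvPolynomial.le_totalDegree hv) h
    simp only [Finsupp.sum, id_eq] at h3 hv' ⊢
    omega

lemma pderiv_eq_zero_of_totalDegree_eq_zero (Q : MvPolynomial (Fin N) ℝ) (i : Fin N)
    (h : Q.totalDegree = 0) : MvPolynomial.pderiv i Q = 0 := by
  classical
  have hz := (MvPolynomial.totalDegree_eq_zero_iff (Fin N) Q).mp h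
  conv_lhs => rw [Q.as_sum]
  rw [map_sum]
  apply Finset.sum_eq_zero
  intro v hv
  rw [MvPolynomial.pderiv_monomial]
  have := hz v hv i
  simp [this]

lemma pd3_eval_zero (Q : MvPolynomial (Fin N) ℝ) (hQ : Q.totalDegree ≤ 2) (a b e : Fin N)
    (t : Fin N → ℝ) :
    pd a (pd b (pd e (fun x => MvPolynomial.eval x Q))) t = 0 := by
  have h1 : (pd e (fun x => MvPolynomial.eval x Q)) = fun x => MvPolynomial.eval x (pderiv e Q) :=
    funext fun x => pd_eval Q e x
  have h2 : (pd b (fun x => MvPolynomial.eval x (pderiv e Q)))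
      = fun x => MvPolynomial.eval x (pderiv b (pderiv e Q)) :=
    funext fun x => pd_eval _ b x
  rw [h1, h2, pd_eval]
  have d1 : (pderiv e Q).totalDegree ≤ 1 := totalDegree_pderiv_le Q e hQ
  have d2 : (pderiv b (pderiv e Q)).totalDegree = 0 :=
    Nat.le_zero.mp (totalDegree_pderiv_le _ b d1)
  rw [pderiv_eq_zero_of_totalDegree_eq_zero _ a d2]
  simp

end poly

section main
variable {N : ℕ} [NeZero N]

lemma contDiffAt_coord (ε : Fin N) (x : Fin N → ℝ) :
    ContDiffAt ℝ (⊤ : ℕ∞) (fun y : Fin N → ℝ => y ε) x :=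
  ((ContinuousLinearMap.proj ε : (Fin N → ℝ) →L[ℝ] ℝ).contDiff).contDiffAt

variable {U : Set (Fin N → ℝ)} {F : (Fin N → ℝ) → ℝ}

lemma nice_pd' {f : (Fin N → ℝ) → ℝ} {a : Fin N}
    (hf : ∀ x ∈ U, ContDiffAt ℝ (⊤ : ℕ∞) f x) :
    ∀ x ∈ U, ContDiffAt ℝ (⊤ : ℕ∞) (pd a f) x :=
  fun x hx => contDiffAt_pd (hf x hx) a

lemma nice_c3 (hF : ∀ x ∈ U, ContDiffAt ℝ (⊤ : ℕ∞) F x) (a b e : Fin N) :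
    ∀ x ∈ U, ContDiffAt ℝ (⊤ : ℕ∞) (c3 F a b e) x :=
  nice_pd' (nice_pd' (nice_pd' hF))

lemma c3_symm12 (hF : ∀ x ∈ U, ContDiffAt ℝ (⊤ : ℕ∞) F x) (a b e : Fin N)
    {x : Fin N → ℝ} (hx : x ∈ U) : c3 F a b e x = c3 F b a e x :=
  pd_comm (contDiffAt_pd (hF x hx) e) a b

/-- algebraic form of the intersection form -/
lemma iform_eq (q : Fin N → ℝ) (x : Fin N → ℝ) (a b : Fin N) :
    iform F q x a b = ∑ ε, (1 - q ε) * x ε * c3 F a.rev b.rev ε x := by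
  unfold iform
  simp only [Matrix.of_apply]
  apply Finset.sum_congr rfl
  intro ε _
  congr 1
  simp [eta, ite_mul, one_mul, zero_mul, Finset.sum_ite_eq']

lemma nice_iform (hF : ∀ x ∈ U, ContDiffAt ℝ (⊤ : ℕ∞) F x) (q : Fin N → ℝ) (a b : Fin N) :
    ∀ x ∈ U, ContDiffAt ℝ (⊤ : ℕ∞) (fun y => iform F q y a b) x := by
  intro x hx
  have : (fun y => iform F q y a b) = fun y => ∑ ε, (1 - q ε) * y ε * c3 F a.rev b.rev ε y :=
    funext fun y => iform_eq q y a b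
  rw [this]
  apply ContDiffAt.sum
  intro ε _
  exact ((contDiffAt_const.mul (contDiffAt_coord ε x)).mul (nice_c3 hF a.rev b.rev ε x hx))

/-- one Euler differentiation step -/
lemma euler_step (hU : IsOpen U) {q : Fin N → ℝ} {f R : (Fin N → ℝ) → ℝ} {μ : ℝ}
    (hf : ∀ x ∈ U, ContDiffAt ℝ (⊤ : ℕ∞) f x) (hR : ∀ x ∈ U, ContDiffAt ℝ (⊤ : ℕ∞) R x)
    (h : ∀ x ∈ U, (∑ σ, (1 - q σ) * x σ * pd σ f x) = μ * f x + R x) (γ : Fin N) :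
    ∀ x ∈ U, (∑ σ, (1 - q σ) * x σ * pd σ (pd γ f) x)
      = (μ - (1 - q γ)) * pd γ f x + pd γ R x := by
  intro x hx
  have hdf : ∀ σ : Fin N, ∀ y ∈ U, DifferentiableAt ℝ (pd σ f) y :=
    fun σ y hy => diffAt_of_contDiffAt (contDiffAt_pd (hf y hy) σ)
  have e1 : pd γ (fun y => ∑ σ, (1 - q σ) * y σ * pd σ f y) x
      = pd γ (fun y => μ * f y + R y) x := pd_congr_on hU h hx γ
  have e2 : pd γ (fun y => ∑ σ, (1 - q σ) * y σ * pd σ f y) x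
      = (1 - q γ) * pd γ f x + ∑ σ, (1 - q σ) * x σ * pd σ (pd γ f) x := by
    rw [pd_sum (fun σ _ => ((differentiableAt_const _).fun_mul (diffAt_coord σ x)).fun_mul
      (hdf σ x hx))]
    have hterm : ∀ σ : Fin N, pd γ (fun y => (1 - q σ) * y σ * pd σ f y) x
        = (1 - q σ) * x σ * pd σ (pd γ f) x
          + pd σ f x * ((1 - q σ) * (if σ = γ then 1 else 0)) := by
      intro σ
      rw [pd_mul ((differentiableAt_const _).fun_mul (diffAt_coord σ x)) (hdf σ x hx) γ,
        pd_coordmul, pd_comm (hf x hx) γ σ]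
    rw [Finset.sum_congr rfl fun σ _ => hterm σ, Finset.sum_add_distrib]
    have hcol : (∑ σ : Fin N, pd σ f x * ((1 - q σ) * (if σ = γ then 1 else 0)))
        = (1 - q γ) * pd γ f x := by
      rw [Finset.sum_congr rfl (fun σ _ => by rw [mul_ite, mul_ite, mul_one, mul_zero, mul_zero])]
      rw [Finset.sum_ite_eq' Finset.univ γ (fun σ => pd σ f x * (1 - q σ))]
      simp [mul_comm]
    rw [hcol]
    ring
  have e3 : pd γ (fun y => μ * f y + R y) x = μ * pd γ f x + pd γ R x := by
    rw [pd_add ((differentiableAt_const μ).fun_mul (diffAt_of_contDiffAt (hf x hx)))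
      (diffAt_of_contDiffAt (hR x hx)), pd_const_mul (diffAt_of_contDiffAt (hf x hx))]
  rw [e2, e3] at e1
  linarith

/-- thrice-differentiated quasihomogeneity -/
lemma euler3 (hU : IsOpen U) {q : Fin N → ℝ} {d : ℝ}
    (hF : ∀ x ∈ U, ContDiffAt ℝ (⊤ : ℕ∞) F x) (hQ : IsQH F U q d) (a b e : Fin N) :
    ∀ x ∈ U, (∑ σ, (1 - q σ) * x σ * pd σ (c3 F a b e) x)
      = (q a + q b + q e - d) * c3 F a b e x := by
  obtain ⟨Q, hdeg, hid⟩ := hQ.2.2.2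
  have nQ : ∀ x ∈ U, ContDiffAt ℝ (⊤ : ℕ∞) (fun y => MvPolynomial.eval y Q) x :=
    fun x _ => (contDiff_eval Q).contDiffAt
  have s1 := euler_step hU hF nQ hid e
  have s2 := euler_step hU (nice_pd' hF) (nice_pd' nQ) s1 b
  have s3 := euler_step hU (nice_pd' (nice_pd' hF)) (nice_pd' (nice_pd' nQ)) s2 a
  intro x hx
  have h3 := s3 x hx
  rw [pd3_eval_zero Q hdeg a b e x] at h3
  have hc : c3 F a b e = pd a (pd b (pd e F)) := rfl
  rw [hc, h3]
  ring

/-- homogeneity of the intersection form -/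
lemma gHom (hU : IsOpen U) {q : Fin N → ℝ} {d : ℝ}
    (hF : ∀ x ∈ U, ContDiffAt ℝ (⊤ : ℕ∞) F x) (hQ : IsQH F U q d) (a b : Fin N) :
    ∀ x ∈ U, (∑ γ, (1 - q γ) * x γ * pd γ (fun y => iform F q y a b) x)
      = (1 + d - q a - q b) * iform F q x a b := by
  intro x hx
  have hrw : (fun y => iform F q y a b)
      = fun y => ∑ ε, (1 - q ε) * y ε * c3 F a.rev b.rev ε y :=
    funext fun y => iform_eq q y a b
  have hdc : ∀ ε : Fin N, DifferentiableAt ℝ (c3 F a.rev b.rev ε) x :=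
    fun ε => diffAt_of_contDiffAt (nice_c3 hF a.rev b.rev ε x hx)
  have hpd : ∀ γ : Fin N, pd γ (fun y => iform F q y a b) x
      = (∑ ε, (1 - q ε) * x ε * pd γ (c3 F a.rev b.rev ε) x)
        + (1 - q γ) * c3 F a.rev b.rev γ x := by
    intro γ
    rw [hrw, pd_sum (fun ε _ => ((differentiableAt_const _).fun_mul (diffAt_coord ε x)).fun_mul (hdc ε))]
    have hterm : ∀ ε : Fin N, pd γ (fun y => (1 - q ε) * y ε * c3 F a.rev b.rev ε y) x
        = (1 - q ε) * x ε * pd γ (c3 F a.rev b.rev ε) x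
          + c3 F a.rev b.rev ε x * ((1 - q ε) * (if ε = γ then 1 else 0)) := by
      intro ε
      rw [pd_mul ((differentiableAt_const _).fun_mul (diffAt_coord ε x)) (hdc ε) γ, pd_coordmul]
    rw [Finset.sum_congr rfl fun ε _ => hterm ε, Finset.sum_add_distrib]
    congr 1
    rw [Finset.sum_congr rfl (fun ε _ => by rw [mul_ite, mul_ite, mul_one, mul_zero, mul_zero])]
    rw [Finset.sum_ite_eq' Finset.univ γ (fun ε => c3 F a.rev b.rev ε x * (1 - q ε))]
    simp [mul_comm]
  have T1 : (∑ γ : Fin N, (1 - q γ) * x γ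
        * (∑ ε, (1 - q ε) * x ε * pd γ (c3 F a.rev b.rev ε) x))
      = ∑ ε : Fin N, (1 - q ε) * x ε
        * ((q a.rev + q b.rev + q ε - d) * c3 F a.rev b.rev ε x) := by
    have step1 : ∀ γ : Fin N, (1 - q γ) * x γ
          * (∑ ε, (1 - q ε) * x ε * pd γ (c3 F a.rev b.rev ε) x)
        = ∑ ε : Fin N, (1 - q ε) * x ε
            * ((1 - q γ) * x γ * pd γ (c3 F a.rev b.rev ε) x) := by
      intro γ
      rw [Finset.mul_sum]
      exact Finset.sum_congr rfl fun ε _ => by ring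
    rw [Finset.sum_congr rfl fun γ _ => step1 γ, Finset.sum_comm]
    apply Finset.sum_congr rfl
    intro ε _
    rw [← Finset.mul_sum, euler3 hU hF hQ a.rev b.rev ε x hx]
  have qa : q a.rev = d - q a := by have := hQ.2.2.1 a; linarith
  have qb : q b.rev = d - q b := by have := hQ.2.2.1 b; linarith
  calc (∑ γ, (1 - q γ) * x γ * pd γ (fun y => iform F q y a b) x)
      = (∑ γ : Fin N, ((1 - q γ) * x γ
            * (∑ ε, (1 - q ε) * x ε * pd γ (c3 F a.rev b.rev ε) x)
          + (1 - q γ) * x γ * ((1 - q γ) * c3 F a.rev b.rev γ x))) := by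
        apply Finset.sum_congr rfl
        intro γ _
        rw [hpd γ, mul_add]
    _ = (∑ ε : Fin N, (1 - q ε) * x ε
            * ((q a.rev + q b.rev + q ε - d) * c3 F a.rev b.rev ε x))
        + ∑ γ : Fin N, (1 - q γ) * x γ * ((1 - q γ) * c3 F a.rev b.rev γ x) := by
        rw [Finset.sum_add_distrib, T1]
    _ = ∑ ε : Fin N, (1 + d - q a - q b) * ((1 - q ε) * x ε * c3 F a.rev b.rev ε x) := by
        rw [← Finset.sum_add_distrib]
        apply Finset.sum_congr rfl
        intro ε _
        rw [qa, qb]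
        ring
    _ = (1 + d - q a - q b) * iform F q x a b := by
        rw [← Finset.mul_sum, iform_eq]

/-- last column/row of the intersection form -/
lemma gLast (hU : IsOpen U) {q : Fin N → ℝ} (hW : IsWDVV F U) (a : Fin N) :
    ∀ x ∈ U, iform F q x a (lastIdx N) = (1 - q a) * x a := by
  intro x hx
  rw [iform_eq]
  have hrev : (lastIdx N).rev = (0 : Fin N) := by
    simp [lastIdx, Fin.rev_rev]
  have hc : ∀ ε : Fin N, c3 F a.rev (lastIdx N).rev ε x = if ε = a then 1 else 0 := by
    intro ε
    rw [hrev, c3_symm12 hW.1 a.rev 0 ε hx, hW.2.1 x hx a.rev ε]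
    simp [eta, Fin.rev_rev]
  rw [Finset.sum_congr rfl fun ε _ => by rw [hc ε, mul_ite, mul_one, mul_zero]]
  rw [Finset.sum_ite_eq' Finset.univ a (fun ε => (1 - q ε) * x ε)]
  simp [mul_comm]

lemma gSymm {q : Fin N → ℝ} (hW : IsWDVV F U) (a b : Fin N) :
    ∀ x ∈ U, iform F q x a b = iform F q x b a := by
  intro x hx
  rw [iform_eq, iform_eq]
  exact Finset.sum_congr rfl fun ε _ => by
    rw [c3_symm12 hW.1 a.rev b.rev ε hx]

/-- differentiability of finite products -/
lemma diffAt_finprod {ι : Type*} {s : Finset ι} {f : ι → (Fin N → ℝ) → ℝ} {x : Fin N → ℝ}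
    (h : ∀ i ∈ s, DifferentiableAt ℝ (f i) x) :
    DifferentiableAt ℝ (fun y => ∏ i ∈ s, f i y) x := by
  classical
  induction s using Finset.induction_on with
  | empty => simpa using differentiableAt_const (1 : ℝ)
  | @insert a s ha ih =>
    simp only [Finset.prod_insert ha]
    exact (h a (Finset.mem_insert_self a s)).mul
      (ih fun i hi => h i (Finset.mem_insert_of_mem hi))

/-- differentiability of determinants of matrix-valued functions -/
lemma diffAt_matdet {M : (Fin N → ℝ) → Matrix (Fin N) (Fin N) ℝ} {x : Fin N → ℝ}
    (h : ∀ a b, DifferentiableAt ℝ (fun y => M y a b) x) :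
    DifferentiableAt ℝ (fun y => (M y).det) x := by
  simp only [Matrix.det_apply]
  apply DifferentiableAt.fun_sum
  intro σ _
  simp only [Units.smul_def, zsmul_eq_mul]
  exact ((diffAt_finprod (fun i _ => h (σ i) i)).const_mul _)

end main

/-- entrywise partial derivatives of the intersection form, as a matrix -/
noncomputable def Dmat {N : ℕ} (F : (Fin N → ℝ) → ℝ) (q : Fin N → ℝ) (t : Fin N → ℝ)
    (μ : Fin N) : Matrix (Fin N) (Fin N) ℝ :=
  Matrix.of fun a b => pd μ (fun x => iform F q x a b) t

/-- entrywise partial derivatives of the inverse of the intersection form, as a matrix -/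
noncomputable def Pmat {N : ℕ} (F : (Fin N → ℝ) → ℝ) (q : Fin N → ℝ) (t : Fin N → ℝ)
    (μ : Fin N) : Matrix (Fin N) (Fin N) ℝ :=
  Matrix.of fun a b => pd μ (fun x => (iform F q x)⁻¹ a b) t

theorem statement14' {N : ℕ} [NeZero N] (hN : 3 ≤ N)
    (U : Set (Fin N → ℝ)) (hU : IsOpen U)
    (F : (Fin N → ℝ) → ℝ) (q : Fin N → ℝ) (d : ℝ)
    (hW : IsWDVV F U) (hQ : IsQH F U q d) :
    ∀ t ∈ U, IsUnit (iform F q t).det →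
      ∀ α β : Fin N,
        pd α (fun x => (1 - q β) * x β) t +
            ∑ γ, christoffel F q t β α γ * ((1 - q γ) * t γ) =
          ((1 - d) / 2) * (if α = β then 1 else 0) := by
  intro t ht hdet α β
  classical
  have hF := hW.1
  have hdet' : (iform F q t).det ≠ 0 := by
    simpa [isUnit_iff_ne_zero] using hdet
  have ginv1 : iform F q t * (iform F q t)⁻¹ = 1 := Matrix.mul_nonsing_inv _ hdet
  have ginv2 : (iform F q t)⁻¹ * iform F q t = 1 := Matrix.nonsing_inv_mul _ hdet
  have h0symm : ∀ a b, (iform F q t)⁻¹ a b = (iform F q t)⁻¹ b a := by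
    have hsymT : Matrix.transpose (iform F q t) = iform F q t := by
      ext a b
      rw [Matrix.transpose_apply]
      exact gSymm hW b a t ht
    have e1 : Matrix.transpose ((iform F q t)⁻¹) = (iform F q t)⁻¹ := by
      rw [Matrix.transpose_nonsing_inv, hsymT]
    intro a b
    calc (iform F q t)⁻¹ a b = Matrix.transpose ((iform F q t)⁻¹) b a := rfl
      _ = (iform F q t)⁻¹ b a := by rw [e1]
  -- differentiability of all relevant entry functions at t
  have diffg : ∀ (a b : Fin N), ∀ x ∈ U, DifferentiableAt ℝ (fun y => iform F q y a b) x :=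
    fun a b x hx => diffAt_of_contDiffAt (nice_iform hF q a b x hx)
  have diffdet : DifferentiableAt ℝ (fun y => (iform F q y).det) t :=
    diffAt_matdet (fun a b => diffg a b t ht)
  have hev : ∀ᶠ x in nhds t, (iform F q x).det ≠ 0 :=
    diffdet.continuousAt.eventually_ne hdet'
  have hfun_eq : ∀ a b : Fin N, (fun x => (iform F q x)⁻¹ a b)
      = fun x => ((iform F q x).det)⁻¹ * (iform F q x).adjugate a b := by
    intro a b; funext x
    rw [Matrix.inv_def, Matrix.smul_apply, Ring.inverse_eq_inv', smul_eq_mul]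
  have diffadj : ∀ a b : Fin N, DifferentiableAt ℝ (fun y => (iform F q y).adjugate a b) t := by
    intro a b
    have e : (fun y => (iform F q y).adjugate a b)
        = fun y => ((iform F q y).updateRow b (Pi.single a 1)).det := by
      funext y; rw [Matrix.adjugate_apply]
    rw [e]
    apply diffAt_matdet
    intro i j
    by_cases hib : i = b
    · have e2 : (fun y => ((iform F q y).updateRow b (Pi.single a 1)) i j)
          = fun _ => (Pi.single a 1 : Fin N → ℝ) j := by
        funext y; rw [Matrix.updateRow_apply, if_pos hib]
      rw [e2]
      exact differentiableAt_const _
    · have e2 : (fun y => ((iform F q y).updateRow b (Pi.single a 1)) i j)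
          = fun y => iform F q y i j := by
        funext y; rw [Matrix.updateRow_apply, if_neg hib]
      rw [e2]
      exact diffg i j t ht
  have diffh : ∀ a b : Fin N, DifferentiableAt ℝ (fun x => (iform F q x)⁻¹ a b) t := by
    intro a b
    rw [hfun_eq]
    exact (diffdet.inv hdet').mul (diffadj a b)
  -- the equation P μ * g + g⁻¹ * D μ = 0
  have hPD : ∀ μ : Fin N, Pmat F q t μ * iform F q t + (iform F q t)⁻¹ * Dmat F q t μ = 0 := by
    intro μ
    ext a b
    have hev2 : (fun x => ∑ k, (iform F q x)⁻¹ a k * iform F q x k b) =ᶠ[nhds t]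
        (fun _ => if a = b then 1 else 0) := by
      filter_upwards [hev] with x hx
      have hxu : IsUnit (iform F q x).det := isUnit_iff_ne_zero.mpr hx
      have hmul := Matrix.nonsing_inv_mul (iform F q x) hxu
      calc ∑ k, (iform F q x)⁻¹ a k * iform F q x k b
          = ((iform F q x)⁻¹ * iform F q x) a b := (Matrix.mul_apply).symm
        _ = (1 : Matrix (Fin N) (Fin N) ℝ) a b := by rw [hmul]
        _ = if a = b then 1 else 0 := Matrix.one_apply
    have e0 : pd μ (fun x => ∑ k, (iform F q x)⁻¹ a k * iform F q x k b) t = 0 := by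
      rw [pd_congr hev2 μ, pd_const]
    rw [pd_sum (fun k _ => (diffh a k).fun_mul (diffg k b t ht)) μ] at e0
    have e1 : ∀ k : Fin N, pd μ (fun x => (iform F q x)⁻¹ a k * iform F q x k b) t
        = (iform F q t)⁻¹ a k * pd μ (fun x => iform F q x k b) t
          + iform F q t k b * pd μ (fun x => (iform F q x)⁻¹ a k) t :=
      fun k => pd_mul (diffh a k) (diffg k b t ht) μ
    rw [Finset.sum_congr rfl (fun k _ => e1 k), Finset.sum_add_distrib] at e0
    show (Pmat F q t μ * iform F q t + (iform F q t)⁻¹ * Dmat F q t μ) a b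
        = (0 : Matrix (Fin N) (Fin N) ℝ) a b
    rw [Matrix.add_apply, Matrix.mul_apply, Matrix.mul_apply, Matrix.zero_apply]
    have e2 : (∑ k, Pmat F q t μ a k * iform F q t k b)
        = ∑ k, iform F q t k b * pd μ (fun x => (iform F q x)⁻¹ a k) t :=
      Finset.sum_congr rfl fun k _ => mul_comm _ _
    have e3 : (∑ k, (iform F q t)⁻¹ a k * Dmat F q t μ k b)
        = ∑ k, (iform F q t)⁻¹ a k * pd μ (fun x => iform F q x k b) t := rfl
    rw [e2, e3]
    linarith [e0]
  have hP : ∀ μ : Fin N, Pmat F q t μ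
      = -((iform F q t)⁻¹ * Dmat F q t μ * (iform F q t)⁻¹) := by
    intro μ
    have h1 : Pmat F q t μ * iform F q t = -((iform F q t)⁻¹ * Dmat F q t μ) :=
      eq_neg_of_add_eq_zero_left (hPD μ)
    calc Pmat F q t μ = Pmat F q t μ * (iform F q t * (iform F q t)⁻¹) := by
          rw [ginv1, Matrix.mul_one]
      _ = (Pmat F q t μ * iform F q t) * (iform F q t)⁻¹ := by rw [Matrix.mul_assoc]
      _ = -((iform F q t)⁻¹ * Dmat F q t μ) * (iform F q t)⁻¹ := by rw [h1]
      _ = -((iform F q t)⁻¹ * Dmat F q t μ * (iform F q t)⁻¹) := by rw [neg_mul]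
  have hgP : ∀ μ : Fin N, iform F q t * Pmat F q t μ
      = -(Dmat F q t μ * (iform F q t)⁻¹) := by
    intro μ
    rw [hP μ, Matrix.mul_neg, ← Matrix.mul_assoc, ← Matrix.mul_assoc, ginv1, Matrix.one_mul]
  -- entry facts
  have ufact : ∀ k : Fin N, (∑ γ, (iform F q t)⁻¹ k γ * ((1 - q γ) * t γ))
      = if k = lastIdx N then 1 else 0 := by
    intro k
    have e : ∀ γ : Fin N, (iform F q t)⁻¹ k γ * ((1 - q γ) * t γ)
        = (iform F q t)⁻¹ k γ * iform F q t γ (lastIdx N) := by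
      intro γ
      rw [gLast hU hW γ t ht]
    rw [Finset.sum_congr rfl fun γ _ => e γ, ← Matrix.mul_apply, ginv2, Matrix.one_apply]
  have Dlast : ∀ μ a : Fin N, Dmat F q t μ a (lastIdx N)
      = (1 - q a) * (if a = μ then 1 else 0) := by
    intro μ a
    have e : Dmat F q t μ a (lastIdx N)
        = pd μ (fun x => iform F q x a (lastIdx N)) t := rfl
    rw [e, pd_congr_on hU (fun x hx => gLast hU hW a x hx) ht μ, pd_coordmul]
  have Dhom : ∀ a b : Fin N, (∑ γ, (1 - q γ) * t γ * Dmat F q t γ a b)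
      = (1 + d - q a - q b) * iform F q t a b :=
    fun a b => gHom hU hF hQ a b t ht
  have helper1 : ∀ (M : Matrix (Fin N) (Fin N) ℝ) (r : Fin N),
      (∑ γ, (M * (iform F q t)⁻¹) r γ * ((1 - q γ) * t γ)) = M r (lastIdx N) := by
    intro M r
    have e : ∀ γ : Fin N, (M * (iform F q t)⁻¹) r γ * ((1 - q γ) * t γ)
        = ∑ k, M r k * ((iform F q t)⁻¹ k γ * ((1 - q γ) * t γ)) := by
      intro γ
      rw [Matrix.mul_apply, Finset.sum_mul]
      exact Finset.sum_congr rfl fun k _ => by ring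
    rw [Finset.sum_congr rfl fun γ _ => e γ, Finset.sum_comm]
    have e2 : ∀ k : Fin N, (∑ γ, M r k * ((iform F q t)⁻¹ k γ * ((1 - q γ) * t γ)))
        = M r k * (if k = lastIdx N then 1 else 0) := by
      intro k
      rw [← Finset.mul_sum, ufact k]
    rw [Finset.sum_congr rfl fun k _ => e2 k]
    simp only [mul_ite, mul_one, mul_zero]
    rw [Finset.sum_ite_eq' Finset.univ (lastIdx N) (fun k => M r k)]
    simp
  -- the three sums
  have hA : (∑ γ, (∑ σ, iform F q t β σ * Pmat F q t α σ γ) * ((1 - q γ) * t γ))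
      = -((1 - q β) * (if β = α then 1 else 0)) := by
    have h1 : ∀ γ : Fin N, (∑ σ, iform F q t β σ * Pmat F q t α σ γ)
        = -((Dmat F q t α * (iform F q t)⁻¹) β γ) := by
      intro γ
      rw [← Matrix.mul_apply, hgP α, Matrix.neg_apply]
    rw [Finset.sum_congr rfl fun γ _ => by rw [h1 γ, neg_mul]]
    rw [Finset.sum_neg_distrib, helper1 (Dmat F q t α) β, Dlast α β]
  have hB : (∑ γ, (∑ σ, iform F q t β σ * Pmat F q t γ σ α) * ((1 - q γ) * t γ))
      = -(1 + d - q β) * (if β = α then 1 else 0)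
        + ∑ j, q j * (iform F q t β j * (iform F q t)⁻¹ j α) := by
    have h1 : ∀ γ : Fin N, (∑ σ, iform F q t β σ * Pmat F q t γ σ α)
        = -(∑ j, Dmat F q t γ β j * (iform F q t)⁻¹ j α) := by
      intro γ
      rw [← Matrix.mul_apply, hgP γ, Matrix.neg_apply, Matrix.mul_apply]
    have h2 : ∀ γ : Fin N, (∑ σ, iform F q t β σ * Pmat F q t γ σ α) * ((1 - q γ) * t γ)
        = ∑ j, -((1 - q γ) * t γ * Dmat F q t γ β j * (iform F q t)⁻¹ j α) := by
      intro γ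
      rw [h1 γ, neg_mul, Finset.sum_mul, ← Finset.sum_neg_distrib]
      exact Finset.sum_congr rfl fun j _ => by ring
    rw [Finset.sum_congr rfl fun γ _ => h2 γ, Finset.sum_comm]
    have h3 : ∀ j : Fin N,
        (∑ γ, -((1 - q γ) * t γ * Dmat F q t γ β j * (iform F q t)⁻¹ j α))
        = -(1 + d - q β) * (iform F q t β j * (iform F q t)⁻¹ j α)
          + q j * (iform F q t β j * (iform F q t)⁻¹ j α) := by
      intro j
      rw [Finset.sum_neg_distrib, ← Finset.sum_mul, Dhom β j]
      ring
    rw [Finset.sum_congr rfl fun j _ => h3 j, Finset.sum_add_distrib, ← Finset.mul_sum]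
    congr 1
    rw [← Matrix.mul_apply, ginv1, Matrix.one_apply]
  have hC : (∑ γ, (∑ σ, iform F q t β σ * Pmat F q t σ α γ) * ((1 - q γ) * t γ))
      = -(if β = α then 1 else 0)
        + ∑ j, q j * (iform F q t β j * (iform F q t)⁻¹ j α) := by
    have inner : ∀ σ : Fin N, (∑ γ, Pmat F q t σ α γ * ((1 - q γ) * t γ))
        = -((iform F q t)⁻¹ α σ * (1 - q σ)) := by
      intro σ
      have e : ∀ γ : Fin N, Pmat F q t σ α γ
          = -(((iform F q t)⁻¹ * Dmat F q t σ * (iform F q t)⁻¹) α γ) := by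
        intro γ
        rw [hP σ, Matrix.neg_apply]
      have e1 : (∑ γ, Pmat F q t σ α γ * ((1 - q γ) * t γ))
          = -(∑ γ, ((iform F q t)⁻¹ * Dmat F q t σ * (iform F q t)⁻¹) α γ
              * ((1 - q γ) * t γ)) := by
        rw [← Finset.sum_neg_distrib]
        exact Finset.sum_congr rfl fun γ _ => by rw [e γ, neg_mul]
      rw [e1, helper1 ((iform F q t)⁻¹ * Dmat F q t σ) α, Matrix.mul_apply]
      have e2 : ∀ i : Fin N, (iform F q t)⁻¹ α i * Dmat F q t σ i (lastIdx N)
          = (iform F q t)⁻¹ α i * (1 - q i) * (if i = σ then 1 else 0) := by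
        intro i
        rw [Dlast σ i]
        ring
      rw [Finset.sum_congr rfl fun i _ => e2 i]
      simp only [ite_mul, mul_ite, mul_one, mul_zero]
      rw [Finset.sum_ite_eq' Finset.univ σ (fun i => (iform F q t)⁻¹ α i * (1 - q i))]
      simp
    have h2 : ∀ γ : Fin N, (∑ σ, iform F q t β σ * Pmat F q t σ α γ) * ((1 - q γ) * t γ)
        = ∑ σ, iform F q t β σ * (Pmat F q t σ α γ * ((1 - q γ) * t γ)) := by
      intro γ
      rw [Finset.sum_mul]
      exact Finset.sum_congr rfl fun σ _ => by ring
    rw [Finset.sum_congr rfl fun γ _ => h2 γ, Finset.sum_comm]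
    have h3 : ∀ σ : Fin N, (∑ γ, iform F q t β σ * (Pmat F q t σ α γ * ((1 - q γ) * t γ)))
        = -(iform F q t β σ * (iform F q t)⁻¹ σ α)
          + q σ * (iform F q t β σ * (iform F q t)⁻¹ σ α) := by
      intro σ
      rw [← Finset.mul_sum, inner σ, h0symm α σ]
      ring
    rw [Finset.sum_congr rfl fun σ _ => h3 σ, Finset.sum_add_distrib, Finset.sum_neg_distrib,
      ← Matrix.mul_apply, ginv1, Matrix.one_apply]
  -- assembling
  have hsplit : ∀ γ : Fin N, (∑ σ, iform F q t β σ
        * (Pmat F q t α σ γ + Pmat F q t γ σ α - Pmat F q t σ α γ))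
      = (∑ σ, iform F q t β σ * Pmat F q t α σ γ)
        + (∑ σ, iform F q t β σ * Pmat F q t γ σ α)
        - (∑ σ, iform F q t β σ * Pmat F q t σ α γ) := by
    intro γ
    rw [← Finset.sum_add_distrib, ← Finset.sum_sub_distrib]
    exact Finset.sum_congr rfl fun σ _ => by ring
  have hch : (∑ γ, christoffel F q t β α γ * ((1 - q γ) * t γ))
      = 1/2 * ((∑ γ, (∑ σ, iform F q t β σ * Pmat F q t α σ γ) * ((1 - q γ) * t γ))
        + (∑ γ, (∑ σ, iform F q t β σ * Pmat F q t γ σ α) * ((1 - q γ) * t γ))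
        - (∑ γ, (∑ σ, iform F q t β σ * Pmat F q t σ α γ) * ((1 - q γ) * t γ))) := by
    rw [← Finset.sum_add_distrib, ← Finset.sum_sub_distrib, Finset.mul_sum]
    apply Finset.sum_congr rfl
    intro γ _
    have e : christoffel F q t β α γ = 1/2 * ∑ σ, iform F q t β σ
        * (Pmat F q t α σ γ + Pmat F q t γ σ α - Pmat F q t σ α γ) := rfl
    rw [e, hsplit γ]
    ring
  rw [pd_coordmul, hch, hA, hB, hC]
  by_cases hab : α = β
  · subst hab
    simp only [if_pos rfl]
    ring
  · have hba : ¬(β = α) := fun hh => hab hh.symm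
    simp only [if_neg hab, if_neg hba]
    ring


/-- the Levi-Civita covariant derivative of the Euler vector field with
respect to the intersection form satisfies `∇_α E^β = ((1-d)/2) δ^β_α`; in particular,
if `d = 1` then `E` is covariantly constant. -/
theorem statement14 {N : ℕ} [NeZero N] (hN : 3 ≤ N)
    (U : Set (Fin N → ℝ)) (hU : IsOpen U)
    (F : (Fin N → ℝ) → ℝ) (q : Fin N → ℝ) (d : ℝ)
    (hW : IsWDVV F U) (hQ : IsQH F U q d) :
    ∀ t ∈ U, IsUnit (iform F q t).det →
      ∀ α β : Fin N,
        pd α (fun x => (1 - q β) * x β) t +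
            ∑ γ, christoffel F q t β α γ * ((1 - q γ) * t γ) =
          ((1 - d) / 2) * (if α = β then 1 else 0) :=
  statement14' hN U hU F q d hW hQ
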